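/- Let P be a probability distribution over the eighteen binary variables (a1,a2,a3,b1,b2,b3,c1,c2,c3,x1,x2,y1,y2,z1,z2,λ_A,λ_B,λ_C), writing x⃗=(x1,x2), y⃗=(y1,y2), z⃗=(z1,z2), 𝟎=(0,0), 𝟏=(1,1). Suppose P(x⃗,y⃗,z⃗) > 0 for all values of the inputs and (λ_A,b3,c3) ⫫_P x⃗ | (y⃗,z⃗). Then P(a1⊕b3⊕c3 = 1 | x⃗=𝟏, y⃗=𝟎, z⃗=𝟎) + P(a1 = λ_A | x⃗=𝟏, y⃗=𝟎, z⃗=𝟎) ≤ P(λ_A⊕b3⊕c3 = 1 | x⃗=𝟎, y⃗=𝟎, z⃗=𝟎) + 1, where ⊕ denotes addition mod 2. -/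

import Mathlib

set_option synthInstance.maxSize 100000
set_option maxHeartbeats 1000000

/-- The nine binary outcome variables. -/
structure Outcome where
  a1 : Bool
  a2 : Bool
  a3 : Bool
  b1 : Bool
  b2 : Bool
  b3 : Bool
  c1 : Bool
  c2 : Bool
  c3 : Bool
deriving DecidableEq, Fintype

/-- The six binary input variables `x⃗ = (x1,x2)`, `y⃗ = (y1,y2)`, `z⃗ = (z1,z2)`. -/
structure Inputs where
  x1 : Bool
  x2 : Bool
  y1 : Bool
  y2 : Bool
  z1 : Bool
  z2 : Bool
deriving DecidableEq, Fintype

/-- The three binary hidden causal order variables `λ_A, λ_B, λ_C`. -/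
structure Lams where
  lA : Bool
  lB : Bool
  lC : Bool
deriving DecidableEq, Fintype

/-- The probability of the event `E` under the distribution `P`. -/
def pr (P : Outcome → Inputs → Lams → ℝ) (E : Outcome → Inputs → Lams → Prop)
    [∀ o i l, Decidable (E o i l)] : ℝ :=
  ∑ o : Outcome, ∑ i : Inputs, ∑ l : Lams, if E o i l then P o i l else 0

/-- The conditional probability `P(E | F) = P(E ∧ F) / P(F)`. -/
noncomputable def cpr (P : Outcome → Inputs → Lams → ℝ) (E F : Outcome → Inputs → Lams → Prop)
    [∀ o i l, Decidable (E o i l)] [∀ o i l, Decidable (F o i l)] : ℝ :=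
  pr P (fun o i l => E o i l ∧ F o i l) / pr P F

section aux
variable (P : Outcome → Inputs → Lams → ℝ)

lemma pr_congr (E F : Outcome → Inputs → Lams → Prop)
    [∀ o i l, Decidable (E o i l)] [∀ o i l, Decidable (F o i l)]
    (h : ∀ o i l, E o i l ↔ F o i l) : pr P E = pr P F := by
  unfold pr
  refine Finset.sum_congr rfl fun o _ => Finset.sum_congr rfl fun i _ =>
    Finset.sum_congr rfl fun l _ => ?_
  simp only [h]

lemma pr_mono (hnn : ∀ o i l, 0 ≤ P o i l) (E F : Outcome → Inputs → Lams → Prop)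
    [∀ o i l, Decidable (E o i l)] [∀ o i l, Decidable (F o i l)]
    (h : ∀ o i l, E o i l → F o i l) : pr P E ≤ pr P F := by
  unfold pr
  refine Finset.sum_le_sum fun o _ => Finset.sum_le_sum fun i _ =>
    Finset.sum_le_sum fun l _ => ?_
  by_cases hE : E o i l
  · rw [if_pos hE, if_pos (h o i l hE)]
  · rw [if_neg hE]
    split
    · exact hnn o i l
    · exact le_refl 0

lemma pr_union_bound (hnn : ∀ o i l, 0 ≤ P o i l)
    (E F G : Outcome → Inputs → Lams → Prop)
    [∀ o i l, Decidable (E o i l)] [∀ o i l, Decidable (F o i l)]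
    [∀ o i l, Decidable (G o i l)] :
    pr P (fun o i l => E o i l ∧ G o i l) + pr P (fun o i l => F o i l ∧ G o i l)
      ≤ pr P (fun o i l => (E o i l ∧ F o i l) ∧ G o i l) + pr P G := by
  unfold pr
  rw [← Finset.sum_add_distrib, ← Finset.sum_add_distrib]
  refine Finset.sum_le_sum fun o _ => ?_
  rw [← Finset.sum_add_distrib, ← Finset.sum_add_distrib]
  refine Finset.sum_le_sum fun i _ => ?_
  rw [← Finset.sum_add_distrib, ← Finset.sum_add_distrib]
  refine Finset.sum_le_sum fun l _ => ?_
  have := hnn o i l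
  by_cases hE : E o i l <;> by_cases hF : F o i l <;> by_cases hG : G o i l <;>
    simp [hE, hF, hG] <;> linarith

lemma decomp (iv : Inputs) :
    pr P (fun o i l => Bool.xor l.lA (Bool.xor o.b3 o.c3) = true ∧ i = iv)
    = pr P (fun o i l => l.lA = true ∧ o.b3 = true ∧ o.c3 = true ∧ i = iv)
    + pr P (fun o i l => l.lA = true ∧ o.b3 = false ∧ o.c3 = false ∧ i = iv)
    + pr P (fun o i l => l.lA = false ∧ o.b3 = true ∧ o.c3 = false ∧ i = iv)
    + pr P (fun o i l => l.lA = false ∧ o.b3 = false ∧ o.c3 = true ∧ i = iv) := by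
  unfold pr
  rw [← Finset.sum_add_distrib, ← Finset.sum_add_distrib, ← Finset.sum_add_distrib]
  refine Finset.sum_congr rfl fun o _ => ?_
  rw [← Finset.sum_add_distrib, ← Finset.sum_add_distrib, ← Finset.sum_add_distrib]
  refine Finset.sum_congr rfl fun i _ => ?_
  rw [← Finset.sum_add_distrib, ← Finset.sum_add_distrib, ← Finset.sum_add_distrib]
  refine Finset.sum_congr rfl fun l _ => ?_
  cases hA : l.lA <;> cases hB : o.b3 <;> cases hC : o.c3 <;> simp [hA, hB, hC]

lemma inputs_eq_iff (i : Inputs) (a b c d e f : Bool) :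
    i = ⟨a,b,c,d,e,f⟩ ↔ (i.x1 = a ∧ i.x2 = b ∧ i.y1 = c ∧ i.y2 = d ∧ i.z1 = e ∧ i.z2 = f) := by
  obtain ⟨u1,u2,u3,u4,u5,u6⟩ := i
  simp [Inputs.mk.injEq]

end aux

/-- Under positivity of the inputs and the relativistic causality
condition `(λ_A, b3, c3) ⫫ x⃗ | (y⃗, z⃗)`, one has
`P(a1⊕b3⊕c3 = 1 | x⃗=𝟏, y⃗=𝟎, z⃗=𝟎) + P(a1 = λ_A | x⃗=𝟏, y⃗=𝟎, z⃗=𝟎)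
  ≤ P(λ_A⊕b3⊕c3 = 1 | x⃗=𝟎, y⃗=𝟎, z⃗=𝟎) + 1`. -/
theorem stmt8 (P : Outcome → Inputs → Lams → ℝ)
    -- `P` is a probability distribution
    (hnn : ∀ o i l, 0 ≤ P o i l)
    (hsum : (∑ o : Outcome, ∑ i : Inputs, ∑ l : Lams, P o i l) = 1)
    -- all inputs have positive probability
    (hin : ∀ iv : Inputs, 0 < pr P (fun _ i _ => i = iv))
    -- relativistic causality: `(λ_A, b3, c3) ⫫ x⃗ | (y⃗, z⃗)`
    (hRCx : ∀ lAv b3v c3v x1v x2v y1v y2v z1v z2v : Bool,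
      pr P (fun o i l => l.lA = lAv ∧ o.b3 = b3v ∧ o.c3 = c3v ∧
            i.x1 = x1v ∧ i.x2 = x2v ∧ i.y1 = y1v ∧ i.y2 = y2v ∧ i.z1 = z1v ∧ i.z2 = z2v)
          * pr P (fun _ i _ => i.y1 = y1v ∧ i.y2 = y2v ∧ i.z1 = z1v ∧ i.z2 = z2v)
        = pr P (fun o i l => l.lA = lAv ∧ o.b3 = b3v ∧ o.c3 = c3v ∧
            i.y1 = y1v ∧ i.y2 = y2v ∧ i.z1 = z1v ∧ i.z2 = z2v)
          * pr P (fun _ i _ => i.x1 = x1v ∧ i.x2 = x2v ∧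
            i.y1 = y1v ∧ i.y2 = y2v ∧ i.z1 = z1v ∧ i.z2 = z2v)) :
    cpr P (fun o _ _ => Bool.xor o.a1 (Bool.xor o.b3 o.c3) = true)
        (fun _ i _ => i = ⟨true, true, false, false, false, false⟩)
      + cpr P (fun o _ l => o.a1 = l.lA)
        (fun _ i _ => i = ⟨true, true, false, false, false, false⟩)
      ≤ cpr P (fun o _ l => Bool.xor l.lA (Bool.xor o.b3 o.c3) = true)
        (fun _ i _ => i = ⟨false, false, false, false, false, false⟩) + 1 := by
  classical
  have hp1 : 0 < pr P (fun _ i _ => i = (⟨true, true, false, false, false, false⟩ : Inputs)) :=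
    hin _
  have hp0 : 0 < pr P (fun _ i _ => i = (⟨false, false, false, false, false, false⟩ : Inputs)) :=
    hin _
  have hYZ : 0 < pr P (fun _ i _ => i.y1 = false ∧ i.y2 = false ∧ i.z1 = false ∧ i.z2 = false) := by
    refine lt_of_lt_of_le hp0 (pr_mono P hnn _ _ ?_)
    rintro o i l rfl
    simp
  -- per-triple transfer from x = (1,1) to x = (0,0)
  have key : ∀ a b c : Bool,
      pr P (fun o i l => l.lA = a ∧ o.b3 = b ∧ o.c3 = c ∧
          i = (⟨true, true, false, false, false, false⟩ : Inputs))
        * pr P (fun _ i _ => i = (⟨false, false, false, false, false, false⟩ : Inputs))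
      = pr P (fun o i l => l.lA = a ∧ o.b3 = b ∧ o.c3 = c ∧
          i = (⟨false, false, false, false, false, false⟩ : Inputs))
        * pr P (fun _ i _ => i = (⟨true, true, false, false, false, false⟩ : Inputs)) := by
    intro a b c
    have e1 := hRCx a b c true true false false false false
    have e0 := hRCx a b c false false false false false false
    have c1 : pr P (fun o i l => l.lA = a ∧ o.b3 = b ∧ o.c3 = c ∧
          i.x1 = true ∧ i.x2 = true ∧ i.y1 = false ∧ i.y2 = false ∧ i.z1 = false ∧ i.z2 = false)
        = pr P (fun o i l => l.lA = a ∧ o.b3 = b ∧ o.c3 = c ∧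
          i = (⟨true, true, false, false, false, false⟩ : Inputs)) := by
      refine pr_congr P _ _ fun o i l => ?_
      rw [inputs_eq_iff]
    have c0 : pr P (fun o i l => l.lA = a ∧ o.b3 = b ∧ o.c3 = c ∧
          i.x1 = false ∧ i.x2 = false ∧ i.y1 = false ∧ i.y2 = false ∧ i.z1 = false ∧ i.z2 = false)
        = pr P (fun o i l => l.lA = a ∧ o.b3 = b ∧ o.c3 = c ∧
          i = (⟨false, false, false, false, false, false⟩ : Inputs)) := by
      refine pr_congr P _ _ fun o i l => ?_
      rw [inputs_eq_iff]
    have d1 : pr P (fun _ i _ => i.x1 = true ∧ i.x2 = true ∧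
          i.y1 = false ∧ i.y2 = false ∧ i.z1 = false ∧ i.z2 = false)
        = pr P (fun _ i _ => i = (⟨true, true, false, false, false, false⟩ : Inputs)) := by
      refine pr_congr P _ _ fun o i l => ?_
      rw [inputs_eq_iff]
    have d0 : pr P (fun _ i _ => i.x1 = false ∧ i.x2 = false ∧
          i.y1 = false ∧ i.y2 = false ∧ i.z1 = false ∧ i.z2 = false)
        = pr P (fun _ i _ => i = (⟨false, false, false, false, false, false⟩ : Inputs)) := by
      refine pr_congr P _ _ fun o i l => ?_
      rw [inputs_eq_iff]
    rw [c1, d1] at e1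
    rw [c0, d0] at e0
    apply mul_right_cancel₀ (ne_of_gt hYZ)
    linear_combination
      pr P (fun _ i _ => i = (⟨false, false, false, false, false, false⟩ : Inputs)) * e1
      - pr P (fun _ i _ => i = (⟨true, true, false, false, false, false⟩ : Inputs)) * e0
  -- transfer for the xor event
  have hL : pr P (fun o i l => Bool.xor l.lA (Bool.xor o.b3 o.c3) = true ∧
        i = (⟨true, true, false, false, false, false⟩ : Inputs))
      * pr P (fun _ i _ => i = (⟨false, false, false, false, false, false⟩ : Inputs))
    = pr P (fun o i l => Bool.xor l.lA (Bool.xor o.b3 o.c3) = true ∧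
        i = (⟨false, false, false, false, false, false⟩ : Inputs))
      * pr P (fun _ i _ => i = (⟨true, true, false, false, false, false⟩ : Inputs)) := by
    rw [decomp P, decomp P]
    linear_combination key true true true + key true false false
      + key false true false + key false false true
  have hcprL : cpr P (fun o _ l => Bool.xor l.lA (Bool.xor o.b3 o.c3) = true)
        (fun _ i _ => i = (⟨true, true, false, false, false, false⟩ : Inputs))
      = cpr P (fun o _ l => Bool.xor l.lA (Bool.xor o.b3 o.c3) = true)
        (fun _ i _ => i = (⟨false, false, false, false, false, false⟩ : Inputs)) := by
    unfold cpr
    rw [div_eq_div_iff (ne_of_gt hp1) (ne_of_gt hp0)]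
    exact hL
  rw [← hcprL]
  -- now everything is conditioned on x = (1,1)
  unfold cpr
  have hub := pr_union_bound P hnn
    (fun o _ _ => Bool.xor o.a1 (Bool.xor o.b3 o.c3) = true)
    (fun o _ l => o.a1 = l.lA)
    (fun _ i _ => i = (⟨true, true, false, false, false, false⟩ : Inputs))
  have himp : pr P (fun o i l => ((Bool.xor o.a1 (Bool.xor o.b3 o.c3) = true) ∧ o.a1 = l.lA) ∧
        i = (⟨true, true, false, false, false, false⟩ : Inputs))
      ≤ pr P (fun o i l => Bool.xor l.lA (Bool.xor o.b3 o.c3) = true ∧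
        i = (⟨true, true, false, false, false, false⟩ : Inputs)) := by
    refine pr_mono P hnn _ _ fun o i l h => ?_
    obtain ⟨⟨h1, h2⟩, h3⟩ := h
    exact ⟨by rw [← h2]; exact h1, h3⟩
  rw [← add_div]
  have h1 : (1:ℝ) = pr P (fun _ i _ => i = (⟨true, true, false, false, false, false⟩ : Inputs))
      / pr P (fun _ i _ => i = (⟨true, true, false, false, false, false⟩ : Inputs)) :=
    (div_self (ne_of_gt hp1)).symm
  rw [h1, ← add_div]
  rw [div_le_div_iff_of_pos_right hp1]
  linarith
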